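/- For any positive semidefinite a ∈ M_n(ℂ), the Schur multiplication norm ‖a‖_S = sup{‖a ∘ b‖ : ‖b‖ ≤ 1} equals max_{1≤i≤n} a_{ii}, where ∘ is entrywise (Hadamard) product and ‖·‖ the operator norm. -/

import Mathlib

open scoped ComplexOrder

noncomputable section

/-- The operator norm of a complex `n × n` matrix, acting on `ℓ²({1,…,n})`. -/
def opNorm {n : ℕ} (a : Matrix (Fin n) (Fin n) ℂ) : ℝ :=
  ‖Matrix.toEuclideanCLM (𝕜 := ℂ) a‖

/-- The Schur multiplier norm: `‖a‖_S = sup {‖a ∘ b‖ : ‖b‖ ≤ 1}`, where `∘` is the Hadamard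
(entrywise) product. -/
def schurNorm {n : ℕ} (a : Matrix (Fin n) (Fin n) ℂ) : ℝ :=
  sSup {r | ∃ b : Matrix (Fin n) (Fin n) ℂ, opNorm b ≤ 1 ∧ r = opNorm (Matrix.hadamard a b)}

namespace SchurAux

variable {n : ℕ}

lemma inner_toEuclideanCLM (A : Matrix (Fin n) (Fin n) ℂ) (x y : EuclideanSpace ℂ (Fin n)) :
    (inner ℂ x (Matrix.toEuclideanCLM (𝕜 := ℂ) A y) : ℂ)
      = ∑ i, ∑ j, (starRingEnd ℂ) (x i) * A i j * y j := by
  rw [PiLp.inner_apply]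
  simp only [RCLike.inner_apply, starRingEnd_apply]
  have : ∀ i, (Matrix.toEuclideanCLM (𝕜 := ℂ) A y) i = ∑ j, A i j * y j := fun i => rfl
  simp only [this, Finset.mul_sum]
  exact Finset.sum_congr rfl fun i _ => by
    rw [Finset.sum_mul]; exact Finset.sum_congr rfl fun j _ => by ring

lemma diag_re_nonneg {a : Matrix (Fin n) (Fin n) ℂ} (ha : a.PosSemidef) (i : Fin n) :
    0 ≤ (a i i).re := by
  have h2 : (0 : ℂ) ≤ a i i := ha.diag_nonneg
  exact (Complex.le_def.mp h2).1

lemma iSup_diag_nonneg {a : Matrix (Fin n) (Fin n) ℂ} (ha : a.PosSemidef) :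
    0 ≤ ⨆ i, (a i i).re :=
  Real.iSup_nonneg (diag_re_nonneg ha)

/-- norm squared of a Euclidean vector as a sum -/
lemma norm_sq_eq (x : EuclideanSpace ℂ (Fin n)) : ‖x‖ ^ 2 = ∑ i, ‖x i‖ ^ 2 := by
  rw [EuclideanSpace.norm_eq, Real.sq_sqrt (Finset.sum_nonneg fun i _ => sq_nonneg _)]

section
open scoped MatrixOrder

lemma exists_eq_conjTranspose_mul_self {a : Matrix (Fin n) (Fin n) ℂ} (ha : a.PosSemidef) :
    ∃ c : Matrix (Fin n) (Fin n) ℂ, a = c.conjTranspose * c := by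
  have h0 : 0 ≤ a := Matrix.nonneg_iff_posSemidef.mpr ha
  refine ⟨CFC.sqrt a, ?_⟩
  rw [← Matrix.star_eq_conjTranspose, (CFC.sqrt_nonneg a).isSelfAdjoint.star_eq,
    CFC.sqrt_mul_sqrt_self a h0]

end

/-- The key bilinear bound. -/
lemma bilinear_bound {a : Matrix (Fin n) (Fin n) ℂ} (b : Matrix (Fin n) (Fin n) ℂ)
    (ha : a.PosSemidef) (x y : EuclideanSpace ℂ (Fin n)) :
    ‖(inner ℂ x (Matrix.toEuclideanCLM (𝕜 := ℂ) (Matrix.hadamard a b) y) : ℂ)‖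
      ≤ (⨆ i, (a i i).re) * opNorm b * ‖x‖ * ‖y‖ := by
  classical
  set M : ℝ := ⨆ i, (a i i).re with hM
  have hM0 : 0 ≤ M := iSup_diag_nonneg ha
  obtain ⟨c, hc⟩ := exists_eq_conjTranspose_mul_self ha
  set u : Fin n → EuclideanSpace ℂ (Fin n) :=
    fun k => (WithLp.equiv 2 _).symm (fun i => c k i * x i) with hu
  set w : Fin n → EuclideanSpace ℂ (Fin n) :=
    fun k => (WithLp.equiv 2 _).symm (fun j => c k j * y j) with hw
  have hukapp : ∀ k i, u k i = c k i * x i := fun k i => rfl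
  have hwkapp : ∀ k j, w k j = c k j * y j := fun k j => rfl
  -- the key algebraic identity
  have key : (inner ℂ x (Matrix.toEuclideanCLM (𝕜 := ℂ) (Matrix.hadamard a b) y) : ℂ)
      = ∑ k, (inner ℂ (u k) (Matrix.toEuclideanCLM (𝕜 := ℂ) b (w k)) : ℂ) := by
    simp only [inner_toEuclideanCLM]
    have : ∀ i j, (starRingEnd ℂ) (x i) * Matrix.hadamard a b i j * y j
        = ∑ k, (starRingEnd ℂ) (u k i) * b i j * (w k j) := by
      intro i j
      simp only [Matrix.hadamard_apply, hc, Matrix.mul_apply, Matrix.conjTranspose_apply,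
        hukapp, hwkapp, map_mul, Finset.sum_mul, Finset.mul_sum]
      refine Finset.sum_congr rfl fun k _ => ?_
      simp only [starRingEnd_apply]
      ring
    simp only [this]
    trans ∑ i, ∑ k, ∑ j, (starRingEnd ℂ) (u k i) * b i j * w k j
    · exact Finset.sum_congr rfl fun i _ => Finset.sum_comm
    · rw [Finset.sum_comm]
  rw [key]
  -- Cauchy–Schwarz estimates
  have step1 : ‖∑ k, (inner ℂ (u k) (Matrix.toEuclideanCLM (𝕜 := ℂ) b (w k)) : ℂ)‖
      ≤ ∑ k, ‖u k‖ * (opNorm b * ‖w k‖) := by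
    refine (norm_sum_le _ _).trans (Finset.sum_le_sum fun k _ => ?_)
    refine (norm_inner_le_norm _ _).trans ?_
    exact mul_le_mul_of_nonneg_left
      ((Matrix.toEuclideanCLM (𝕜 := ℂ) b).le_opNorm (w k)) (norm_nonneg _)
  have husum : ∑ k, ‖u k‖ ^ 2 ≤ M * ‖x‖ ^ 2 := by
    have h1 : ∀ k, ‖u k‖ ^ 2 = ∑ i, ‖c k i‖ ^ 2 * ‖x i‖ ^ 2 := by
      intro k
      rw [norm_sq_eq]
      exact Finset.sum_congr rfl fun i _ => by rw [hukapp, norm_mul, mul_pow]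
    simp only [h1]
    rw [Finset.sum_comm]
    have h2 : ∀ i : Fin n, (∑ k, ‖c k i‖ ^ 2 * ‖x i‖ ^ 2) = (a i i).re * ‖x i‖ ^ 2 := by
      intro i
      rw [← Finset.sum_mul]
      congr 1
      rw [hc]
      simp only [Matrix.mul_apply, Matrix.conjTranspose_apply, Complex.re_sum]
      refine Finset.sum_congr rfl fun k _ => ?_
      rw [Complex.star_def, ← Complex.normSq_eq_conj_mul_self, Complex.ofReal_re,
        Complex.normSq_eq_norm_sq]
    simp only [h2]
    calc ∑ i, (a i i).re * ‖x i‖ ^ 2 ≤ ∑ i, M * ‖x i‖ ^ 2 :=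
          Finset.sum_le_sum fun i _ => mul_le_mul_of_nonneg_right
            (le_ciSup (f := fun i => (a i i).re) (Set.Finite.bddAbove (Set.finite_range _)) i) (sq_nonneg _)
      _ = M * ‖x‖ ^ 2 := by rw [← Finset.mul_sum, norm_sq_eq]
  have hwsum : ∑ k, ‖w k‖ ^ 2 ≤ M * ‖y‖ ^ 2 := by
    have h1 : ∀ k, ‖w k‖ ^ 2 = ∑ j, ‖c k j‖ ^ 2 * ‖y j‖ ^ 2 := by
      intro k
      rw [norm_sq_eq]
      exact Finset.sum_congr rfl fun j _ => by rw [hwkapp, norm_mul, mul_pow]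
    simp only [h1]
    rw [Finset.sum_comm]
    have h2 : ∀ j : Fin n, (∑ k, ‖c k j‖ ^ 2 * ‖y j‖ ^ 2) = (a j j).re * ‖y j‖ ^ 2 := by
      intro j
      rw [← Finset.sum_mul]
      congr 1
      rw [hc]
      simp only [Matrix.mul_apply, Matrix.conjTranspose_apply, Complex.re_sum]
      refine Finset.sum_congr rfl fun k _ => ?_
      rw [Complex.star_def, ← Complex.normSq_eq_conj_mul_self, Complex.ofReal_re,
        Complex.normSq_eq_norm_sq]
    simp only [h2]
    calc ∑ j, (a j j).re * ‖y j‖ ^ 2 ≤ ∑ j, M * ‖y j‖ ^ 2 :=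
          Finset.sum_le_sum fun j _ => mul_le_mul_of_nonneg_right
            (le_ciSup (f := fun j => (a j j).re) (Set.Finite.bddAbove (Set.finite_range _)) j) (sq_nonneg _)
      _ = M * ‖y‖ ^ 2 := by rw [← Finset.mul_sum, norm_sq_eq]
  have step2 : ∑ k, ‖u k‖ * (opNorm b * ‖w k‖) = opNorm b * ∑ k, ‖u k‖ * ‖w k‖ := by
    rw [Finset.mul_sum]; exact Finset.sum_congr rfl fun k _ => by ring
  have step3 : ∑ k, ‖u k‖ * ‖w k‖ ≤ M * ‖x‖ * ‖y‖ := by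
    calc ∑ k, ‖u k‖ * ‖w k‖
        ≤ Real.sqrt (∑ k, ‖u k‖ ^ 2) * Real.sqrt (∑ k, ‖w k‖ ^ 2) :=
          Real.sum_mul_le_sqrt_mul_sqrt _ _ _
      _ ≤ Real.sqrt (M * ‖x‖ ^ 2) * Real.sqrt (M * ‖y‖ ^ 2) :=
          mul_le_mul (Real.sqrt_le_sqrt husum) (Real.sqrt_le_sqrt hwsum)
            (Real.sqrt_nonneg _) (Real.sqrt_nonneg _)
      _ = M * ‖x‖ * ‖y‖ := by
          rw [Real.sqrt_mul hM0, Real.sqrt_mul hM0, Real.sqrt_sq (norm_nonneg _),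
            Real.sqrt_sq (norm_nonneg _)]
          rw [show Real.sqrt M * ‖x‖ * (Real.sqrt M * ‖y‖)
              = (Real.sqrt M * Real.sqrt M) * ‖x‖ * ‖y‖ by ring,
            Real.mul_self_sqrt hM0]
  calc ‖∑ k, (inner ℂ (u k) (Matrix.toEuclideanCLM (𝕜 := ℂ) b (w k)) : ℂ)‖
      ≤ opNorm b * ∑ k, ‖u k‖ * ‖w k‖ := by rw [← step2]; exact step1
    _ ≤ opNorm b * (M * ‖x‖ * ‖y‖) :=
        mul_le_mul_of_nonneg_left step3 (norm_nonneg _)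
    _ = M * opNorm b * ‖x‖ * ‖y‖ := by ring

/-- The Schur multiplier bound. -/
lemma hadamard_opNorm_le {a : Matrix (Fin n) (Fin n) ℂ} (b : Matrix (Fin n) (Fin n) ℂ)
    (ha : a.PosSemidef) :
    opNorm (Matrix.hadamard a b) ≤ (⨆ i, (a i i).re) * opNorm b := by
  set M : ℝ := ⨆ i, (a i i).re with hM
  have hM0 : 0 ≤ M := iSup_diag_nonneg ha
  have hb0 : 0 ≤ opNorm b := norm_nonneg _
  refine ContinuousLinearMap.opNorm_le_bound _ (by positivity) fun y => ?_
  set T := Matrix.toEuclideanCLM (𝕜 := ℂ) (Matrix.hadamard a b) with hT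
  by_cases hz : ‖T y‖ = 0
  · rw [hz]; positivity
  · have h := bilinear_bound b ha (T y) y
    have h' : ‖T y‖ ^ 2 ≤ M * opNorm b * ‖T y‖ * ‖y‖ := by
      have e1 : ‖T y‖ ^ 2 = RCLike.re (inner ℂ (T y) (T y) : ℂ) :=
        (inner_self_eq_norm_sq (𝕜 := ℂ) _).symm
      rw [e1]
      exact (RCLike.re_le_norm _).trans h
    have hpos : 0 < ‖T y‖ := lt_of_le_of_ne (norm_nonneg _) (Ne.symm hz)
    nlinarith [h', hpos]

end SchurAux

/-- For a positive semidefinite matrix, the Schur multiplier norm equals the largest diagonal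
entry. -/
theorem schurNorm_posSemidef {n : ℕ} (a : Matrix (Fin n) (Fin n) ℂ)
    (ha : a.PosSemidef) : schurNorm a = ⨆ i : Fin n, Complex.re (a i i) := by
  classical
  set M : ℝ := ⨆ i, (a i i).re with hM
  have hM0 : 0 ≤ M := SchurAux.iSup_diag_nonneg ha
  set S : Set ℝ :=
    {r | ∃ b : Matrix (Fin n) (Fin n) ℂ, opNorm b ≤ 1 ∧ r = opNorm (Matrix.hadamard a b)} with hS
  have hub : ∀ r ∈ S, r ≤ M := by
    rintro r ⟨b, hb, rfl⟩
    calc opNorm (Matrix.hadamard a b) ≤ M * opNorm b := SchurAux.hadamard_opNorm_le b ha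
      _ ≤ M * 1 := mul_le_mul_of_nonneg_left hb hM0
      _ = M := mul_one M
  have hbdd : BddAbove S := ⟨M, hub⟩
  have hone : opNorm (1 : Matrix (Fin n) (Fin n) ℂ) ≤ 1 := by
    rw [opNorm, map_one]
    exact ContinuousLinearMap.norm_id_le
  have hmem : opNorm (Matrix.hadamard a 1) ∈ S := ⟨1, hone, rfl⟩
  have hge : M ≤ sSup S := by
    by_cases hn : Nonempty (Fin n)
    · refine ciSup_le fun i => ?_
      refine le_trans ?_ (le_csSup hbdd hmem)
      -- (a i i).re ≤ opNorm (a ⊙ 1)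
      set T := Matrix.toEuclideanCLM (𝕜 := ℂ) (Matrix.hadamard a 1) with hT
      set e : EuclideanSpace ℂ (Fin n) := EuclideanSpace.single i (1 : ℂ) with he
      have h1 : (T e) i = a i i := by
        have : (T e) i = ∑ j, Matrix.hadamard a 1 i j * e j := rfl
        rw [this]
        simp [he, Matrix.hadamard_apply, Matrix.one_apply, EuclideanSpace.single_apply]
      have h2 : ‖a i i‖ ≤ ‖T e‖ := by
        rw [← h1]
        have hsq : ‖(T e) i‖ ^ 2 ≤ ‖T e‖ ^ 2 := by
          rw [SchurAux.norm_sq_eq]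
          exact Finset.single_le_sum (fun j _ => sq_nonneg ‖(T e) j‖) (Finset.mem_univ i)
        have := Real.sqrt_le_sqrt hsq
        rwa [Real.sqrt_sq (norm_nonneg _), Real.sqrt_sq (norm_nonneg _)] at this
      have h3 : ‖T e‖ ≤ opNorm (Matrix.hadamard a 1) := by
        have := T.le_opNorm e
        rwa [EuclideanSpace.norm_single, norm_one, mul_one] at this
      exact le_trans (Complex.re_le_norm _) (le_trans h2 h3)
    · have : IsEmpty (Fin n) := not_nonempty_iff.mp hn
      rw [hM, Real.iSup_of_isEmpty]
      exact le_csSup hbdd hmem |>.trans' (norm_nonneg _)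
  have hle : sSup S ≤ M := Real.sSup_le hub hM0
  exact le_antisymm hle hge

end
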